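/- For every u ∈ {1,…,d−1}, the matrix σ_x^{(0u)} + Σ_{k=0, k≠u}^{d−1} σ_x^{(ku)} belongs to 𝔪, the real Lie subalgebra of d×d complex matrices generated by 𝔥 ∪ 𝔥'. -/

import Mathlib

open scoped Matrix
open Finset

attribute [local instance] LieRing.ofAssociativeRing

/-- The d×d Fourier matrix V with entries V_{jk} = ω^{jk}/√d, ω = exp(2πi/d). -/
noncomputable def fourierV (d : ℕ) : Matrix (Fin d) (Fin d) ℂ :=
  Matrix.of fun j k =>
    Complex.exp (2 * Real.pi * Complex.I / d) ^ ((j : ℕ) * (k : ℕ)) / (Real.sqrt d : ℂ)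

/-- σ_x^{(jk)} = i(E_{jk} + E_{kj}). -/
noncomputable def sigmaX {d : ℕ} (j k : Fin d) : Matrix (Fin d) (Fin d) ℂ :=
  Complex.I • (Matrix.single j k 1 + Matrix.single k j 1)

/-- 𝔥: the diagonal matrices diag(iα₀,…,iα_{d−1}) with real αⱼ. -/
def diagLie (d : ℕ) : Set (Matrix (Fin d) (Fin d) ℂ) :=
  {A | ∃ α : Fin d → ℝ, A = Matrix.diagonal fun j => Complex.I * (α j : ℂ)}

/-- 𝔥' = V 𝔥 V⁻¹. -/
noncomputable def diagLieConj (d : ℕ) : Set (Matrix (Fin d) (Fin d) ℂ) :=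
  {A | ∃ B ∈ diagLie d, A = fourierV d * B * (fourierV d)⁻¹}

/-- explicit right inverse of the Fourier matrix -/
noncomputable def fourierW (d : ℕ) : Matrix (Fin d) (Fin d) ℂ :=
  Matrix.of fun j k =>
    Complex.exp (2 * Real.pi * Complex.I / d) ^ ((d - 1) * ((j : ℕ) * (k : ℕ))) / (Real.sqrt d : ℂ)

lemma sqrt_mul_self_complex (d : ℕ) :
    (Real.sqrt d : ℂ) * (Real.sqrt d : ℂ) = (d : ℂ) := by
  norm_cast
  exact Real.mul_self_sqrt (Nat.cast_nonneg d)

lemma fourierV_mul_fourierW (d : ℕ) [NeZero d] : fourierV d * fourierW d = 1 := by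
  have hd : d ≠ 0 := NeZero.ne d
  have hdC : (d : ℂ) ≠ 0 := Nat.cast_ne_zero.mpr hd
  have hω : IsPrimitiveRoot (Complex.exp (2 * Real.pi * Complex.I / d)) d :=
    Complex.isPrimitiveRoot_exp d hd
  set ω := Complex.exp (2 * Real.pi * Complex.I / d) with hωdef
  ext j k
  have hterm : ∀ m : Fin d, fourierV d j m * fourierW d m k =
      (ω ^ ((j : ℕ) + (d - 1) * (k : ℕ))) ^ (m : ℕ) / (d : ℂ) := by
    intro m
    show ω ^ ((j : ℕ) * (m : ℕ)) / (Real.sqrt d : ℂ) *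
        (ω ^ ((d - 1) * ((m : ℕ) * (k : ℕ))) / (Real.sqrt d : ℂ)) = _
    rw [div_mul_div_comm, sqrt_mul_self_complex, ← pow_add, ← pow_mul]
    congr 2
    ring
  rw [Matrix.mul_apply]
  simp_rw [hterm, ← Finset.sum_div]
  set t := (j : ℕ) + (d - 1) * (k : ℕ) with ht
  have hdvd : d ∣ t ↔ j = k := by
    constructor
    · rintro ⟨c, hc⟩
      have hj := j.isLt
      have hk := k.isLt
      have h1 : 1 ≤ d := Nat.one_le_iff_ne_zero.mpr hd
      have := hc
      rw [ht] at this
      -- j + (d-1)*k = d*c ; with j,k < d this forces j = k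
      have : (j : ℤ) - (k : ℤ) = (d : ℤ) * (c - k) := by
        have h2 : ((j : ℕ) : ℤ) + ((d : ℤ) - 1) * (k : ℕ) = (d : ℤ) * c := by
          have := congrArg (Nat.cast : ℕ → ℤ) this
          push_cast [Nat.cast_sub h1] at this
          linarith [this]
        ring_nf
        ring_nf at h2
        linarith [h2]
      have habs : (j : ℤ) - (k : ℤ) = 0 := by
        rcases lt_trichotomy ((c : ℤ) - k) 0 with h | h | h
        · nlinarith [j.isLt, k.isLt, this]
        · rw [h, mul_zero] at this; exact this
        · nlinarith [j.isLt, k.isLt, this]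
      have : (j : ℤ) = (k : ℤ) := by linarith
      exact Fin.ext (by exact_mod_cast this)
    · rintro rfl
      exact ⟨(j : ℕ), by rw [ht]; cases d with
        | zero => exact absurd rfl hd
        | succ n => simp [Nat.succ_sub_one]; ring⟩
  by_cases hjk : j = k
  · have h1 : ω ^ t = 1 := (hω.pow_eq_one_iff_dvd t).mpr (hdvd.mpr hjk)
    rw [h1]
    simp [hjk, Matrix.one_apply, hdC]
  · have h1 : ω ^ t ≠ 1 := fun h => hjk (hdvd.mp ((hω.pow_eq_one_iff_dvd t).mp h))
    have h2 : (ω ^ t) ^ d = 1 := by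
      rw [← pow_mul, mul_comm, pow_mul, hω.pow_eq_one, one_pow]
    rw [show (∑ m : Fin d, (ω ^ t) ^ (m : ℕ)) = ∑ i ∈ range d, (ω ^ t) ^ i from
      Fin.sum_univ_eq_sum_range _ d]
    rw [geom_sum_eq h1, h2]
    simp [Matrix.one_apply, hjk]

/-- the matrix with all entries equal to i -/
noncomputable def oneJ (d : ℕ) : Matrix (Fin d) (Fin d) ℂ := Matrix.of fun _ _ => Complex.I

lemma oneJ_mem (d : ℕ) [NeZero d] : oneJ d ∈ diagLieConj d := by
  have hd : d ≠ 0 := NeZero.ne d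
  have hdC : (d : ℂ) ≠ 0 := Nat.cast_ne_zero.mpr hd
  have hinv : (fourierV d)⁻¹ = fourierW d :=
    Matrix.inv_eq_right_inv (fourierV_mul_fourierW d)
  refine ⟨Matrix.diagonal fun j => Complex.I * ((if j = 0 then (d : ℝ) else 0 : ℝ) : ℂ),
    ⟨fun j => if j = 0 then (d : ℝ) else 0, rfl⟩, ?_⟩
  rw [hinv]
  ext j k
  rw [Matrix.mul_apply]
  simp only [Matrix.mul_diagonal]
  rw [Finset.sum_eq_single (0 : Fin d)]
  · show Complex.I = fourierV d j 0 * _ * fourierW d 0 k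
    have hV : fourierV d j 0 = 1 / (Real.sqrt d : ℂ) := by
      show Complex.exp _ ^ ((j : ℕ) * ((0 : Fin d) : ℕ)) / _ = _
      simp
    have hW : fourierW d 0 k = 1 / (Real.sqrt d : ℂ) := by
      show Complex.exp _ ^ ((d - 1) * (((0 : Fin d) : ℕ) * (k : ℕ))) / _ = _
      simp
    rw [hV, hW]
    norm_num
    rw [show ((Real.sqrt d : ℂ))⁻¹ * (Complex.I * ((d : ℕ) : ℂ)) * ((Real.sqrt d : ℂ))⁻¹
        = Complex.I * (((d : ℕ) : ℂ) / ((Real.sqrt d : ℂ) * (Real.sqrt d : ℂ))) from by ring,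
      sqrt_mul_self_complex, div_self hdC, mul_one]
  · intro b _ hb
    simp [hb]
  · intro h
    exact absurd (Finset.mem_univ _) h

lemma lie_diag {d : ℕ} (v : Fin d → ℂ) (M : Matrix (Fin d) (Fin d) ℂ) :
    ⁅Matrix.diagonal v, M⁆ = Matrix.of fun i j => (v i - v j) * M i j := by
  ext i j
  simp only [Ring.lie_def, Matrix.sub_apply, Matrix.diagonal_mul, Matrix.mul_diagonal,
    Matrix.of_apply]
  ring

lemma key {d : ℕ} [NeZero d] (u : Fin d) (hu : u ≠ 0) :
    sigmaX (0 : Fin d) u + ∑ k ∈ univ \ {u}, sigmaX k u =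
      ⁅Matrix.diagonal (fun j => Complex.I * ((if u = j then (1 : ℝ) else 0 : ℝ) : ℂ)),
        ⁅Matrix.diagonal (fun j => Complex.I *
            (((if (0 : Fin d) = j then (1 : ℝ) else 0) - (if u = j then (1 : ℝ) else 0) : ℝ) : ℂ)),
          oneJ d⁆⁆ := by
  rw [lie_diag, lie_diag]
  ext i j
  simp only [Matrix.add_apply, Matrix.sum_apply, sigmaX, Matrix.smul_apply, Matrix.add_apply,
    Matrix.single, Matrix.of_apply, smul_eq_mul, oneJ]
  have hu' : u ≠ 0 := hu
  by_cases hiu : u = i <;> by_cases hju : u = j <;>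
    by_cases hi0 : (0 : Fin d) = i <;> by_cases hj0 : (0 : Fin d) = j <;>
    simp_all [Finset.sum_ite_eq', mul_add, Finset.mul_sum, apply_ite Complex.ofReal]
  all_goals try simp_all [eq_comm]
  all_goals try simp [Finset.sum_ite_eq, Finset.sum_add_distrib]
  all_goals linear_combination (2 * Complex.I) * Complex.I_mul_I

/-- For every u ∈ {1,…,d−1}, σ_x^{(0u)} + Σ_{k=0, k≠u}^{d−1} σ_x^{(ku)} belongs to the
    real Lie subalgebra 𝔪 generated by 𝔥 ∪ 𝔥'. -/
theorem sigmaX_combo_mem_lieSpan (d : ℕ) [NeZero d] (u : Fin d) (hu : 1 ≤ (u : ℕ)) :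
    sigmaX (0 : Fin d) u + ∑ k ∈ univ \ {u}, sigmaX k u ∈
      LieSubalgebra.lieSpan ℝ (Matrix (Fin d) (Fin d) ℂ) (diagLie d ∪ diagLieConj d) := by
  have hu' : u ≠ 0 := by
    intro h
    rw [h] at hu
    simp at hu
  rw [key u hu']
  apply LieSubalgebra.lie_mem
  · exact LieSubalgebra.subset_lieSpan (Or.inl ⟨fun j => if u = j then (1 : ℝ) else 0, rfl⟩)
  apply LieSubalgebra.lie_mem
  · exact LieSubalgebra.subset_lieSpan (Or.inl
      ⟨fun j => (if (0 : Fin d) = j then (1 : ℝ) else 0) - (if u = j then (1 : ℝ) else 0), rfl⟩)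
  · exact LieSubalgebra.subset_lieSpan (Or.inr (oneJ_mem d))
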